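/- Let λ be a strict partition with exactly n parts and let A ∈ UA^λ(n) with compass point matrix C(A). Then for every k = 1, …, n: χ(P_k) + χ(P_k̄) = 1; that is, exactly one of the first entries c_{k1}, c_{k̄1} of rows k and k̄ of C(A) lies in {WE, SW, NW}. -/

import Mathlib

open scoped Classical BigOperators

namespace TokC

/-- The letter (0-based) of an element of the alphabet `Fin (2*n)`, where index `2*k`
represents the unbarred letter `k+1` and index `2*k+1` represents the barred letter. -/
def letK {n : ℕ} (ℓ : Fin (2 * n)) : Fin n :=
  ⟨ℓ.val / 2, by have := ℓ.isLt; omega⟩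

/-- The alphabet index of the unbarred letter `k` (0-based). -/
def rU {n : ℕ} (k : Fin n) : Fin (2 * n) := ⟨2 * k.val, by have := k.isLt; omega⟩

/-- The alphabet index of the barred letter `k̄` (0-based). -/
def rB {n : ℕ} (k : Fin n) : Fin (2 * n) := ⟨2 * k.val + 1, by have := k.isLt; omega⟩

/-! ### Young diagrams and symplectic tableaux -/

/-- Boxes of the Young diagram of `μ` (rows 0-indexed by `Fin n`, columns 0-indexed). -/
def ydBoxes (n : ℕ) (μ : Fin n → ℕ) : Finset (Fin n × ℕ) :=
  Finset.univ.biUnion fun i => (Finset.range (μ i)).image fun j => (i, j)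

/-- A symplectic tableau of shape `μ`: rows weakly increase, columns strictly increase,
and every entry of row `k` is at least the unbarred letter `k`. -/
def IsSympTab (n : ℕ) (μ : Fin n → ℕ)
    (T : {p // p ∈ ydBoxes n μ} → Fin (2 * n)) : Prop :=
  (∀ p q : {p // p ∈ ydBoxes n μ}, p.1.1 = q.1.1 → p.1.2 ≤ q.1.2 → T p ≤ T q) ∧
  (∀ p q : {p // p ∈ ydBoxes n μ}, p.1.2 = q.1.2 → p.1.1 < q.1.1 → T p < T q) ∧
  (∀ p : {p // p ∈ ydBoxes n μ}, 2 * p.1.1.val ≤ (T p).val)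

/-- Contribution of a single entry to the deformed symplectic character:
`x_k` for the unbarred letter `k`, `t²·x_k⁻¹` for the barred letter `k̄`. -/
noncomputable def spWgtE {K : Type*} [Field K] {n : ℕ} (x : Fin n → K) (t : K)
    (ℓ : Fin (2 * n)) : K :=
  if ℓ.val % 2 = 0 then x (letK ℓ) else t ^ 2 * (x (letK ℓ))⁻¹

/-- The deformed symplectic character `sp_μ(x;t)`. -/
noncomputable def spChar {K : Type*} [Field K] (n : ℕ) (μ : Fin n → ℕ)
    (x : Fin n → K) (t : K) : K :=
  ∑ᶠ (T : {p // p ∈ ydBoxes n μ} → Fin (2 * n)) (_ : IsSympTab n μ T),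
    ∏ p : {p // p ∈ ydBoxes n μ}, spWgtE x t (T p)

/-! ### Shifted diagrams, symplectic shifted tableaux and primed tableaux -/

/-- Boxes of the shifted diagram of `lam` (0-indexed): row `i` has columns
`i ≤ j < i + lam i`. -/
def sdBoxes (n : ℕ) (lam : Fin n → ℕ) : Finset (ℕ × ℕ) :=
  Finset.univ.biUnion fun i : Fin n =>
    (Finset.Ico i.val (i.val + lam i)).image fun j => (i.val, j)

/-- A symplectic shifted tableau: rows and columns weakly increase, and diagonals
(top-left to bottom-right) strictly increase. -/
def IsSST (n : ℕ) (lam : Fin n → ℕ)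
    (S : {p // p ∈ sdBoxes n lam} → Fin (2 * n)) : Prop :=
  (∀ p q : {p // p ∈ sdBoxes n lam}, p.1.1 = q.1.1 → p.1.2 ≤ q.1.2 → S p ≤ S q) ∧
  (∀ p q : {p // p ∈ sdBoxes n lam}, p.1.2 = q.1.2 → p.1.1 ≤ q.1.1 → S p ≤ S q) ∧
  (∀ p q : {p // p ∈ sdBoxes n lam}, q.1.1 = p.1.1 + 1 → q.1.2 = p.1.2 + 1 → S p < S q)

/-- A primed symplectic shifted tableau: an underlying symplectic shifted tableau `S`
together with a marking `P` such that a box equal to its left neighbour is unmarked and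
a box equal to the box below it is marked. -/
def IsQT (n : ℕ) (lam : Fin n → ℕ)
    (S : {p // p ∈ sdBoxes n lam} → Fin (2 * n))
    (P : {p // p ∈ sdBoxes n lam} → Bool) : Prop :=
  IsSST n lam S ∧
  (∀ p q : {p // p ∈ sdBoxes n lam},
      q.1.1 = p.1.1 → q.1.2 = p.1.2 + 1 → S p = S q → P q = false) ∧
  (∀ p q : {p // p ∈ sdBoxes n lam},
      q.1.1 = p.1.1 + 1 → q.1.2 = p.1.2 → S p = S q → P p = true)

/-- Weight of a single (possibly primed) entry: `x_k`, `y_k` (primed), `t²x_k⁻¹`,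
`t²y_k⁻¹` (primed). -/
noncomputable def qtWgtE {K : Type*} [Field K] {n : ℕ} (x y : Fin n → K) (t : K)
    (ℓ : Fin (2 * n)) (b : Bool) : K :=
  if ℓ.val % 2 = 0 then (if b then y (letK ℓ) else x (letK ℓ))
  else t ^ 2 * (if b then (y (letK ℓ))⁻¹ else (x (letK ℓ))⁻¹)

/-- The deformed symplectic Q-function `Q_λ(x/y;t)`. -/
noncomputable def QFun {K : Type*} [Field K] (n : ℕ) (lam : Fin n → ℕ)
    (x y : Fin n → K) (t : K) : K :=
  ∑ᶠ (SP : ({p // p ∈ sdBoxes n lam} → Fin (2 * n)) ×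
        ({p // p ∈ sdBoxes n lam} → Bool)) (_ : IsQT n lam SP.1 SP.2),
    ∏ p : {p // p ∈ sdBoxes n lam}, qtWgtE x y t (SP.1 p) (SP.2 p)

/-! ### Neighbour-dependent weights on symplectic shifted tableaux -/

/-- The weight of the entry of box `p` in an unprimed symplectic shifted tableau,
as in Theorem `thm-main`: `x_k` if the left neighbour is equal, `y_k` if the neighbour
below is equal, `x_k + y_k` otherwise (barred letters use inverses). -/
noncomputable def stWgtE {K : Type*} [Field K] (n : ℕ) (lam : Fin n → ℕ)
    (x y : Fin n → K)
    (S : {p // p ∈ sdBoxes n lam} → Fin (2 * n)) (p : {p // p ∈ sdBoxes n lam}) : K :=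
  let k := letK (S p)
  let leftSame : Prop :=
    0 < p.1.2 ∧ ∃ h : (p.1.1, p.1.2 - 1) ∈ sdBoxes n lam, S ⟨(p.1.1, p.1.2 - 1), h⟩ = S p
  let belowSame : Prop :=
    ∃ h : (p.1.1 + 1, p.1.2) ∈ sdBoxes n lam, S ⟨(p.1.1 + 1, p.1.2), h⟩ = S p
  if (S p).val % 2 = 0 then
    (if leftSame then x k else if belowSame then y k else x k + y k)
  else
    (if leftSame then (x k)⁻¹ else if belowSame then (y k)⁻¹ else (x k)⁻¹ + (y k)⁻¹)

/-- The `q`-deformed weight of the entry of box `p` in an unprimed symplectic shifted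
tableau: `x_k` if the left neighbour is equal, `q·x_k` if the neighbour above is
equal, `(1+q)·x_k` otherwise (barred letters use inverses and `q⁻¹`). -/
noncomputable def stWgtQE {K : Type*} [Field K] (n : ℕ) (lam : Fin n → ℕ)
    (x : Fin n → K) (q : K)
    (S : {p // p ∈ sdBoxes n lam} → Fin (2 * n)) (p : {p // p ∈ sdBoxes n lam}) : K :=
  let k := letK (S p)
  let leftSame : Prop :=
    0 < p.1.2 ∧ ∃ h : (p.1.1, p.1.2 - 1) ∈ sdBoxes n lam, S ⟨(p.1.1, p.1.2 - 1), h⟩ = S p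
  let aboveSame : Prop :=
    0 < p.1.1 ∧ ∃ h : (p.1.1 - 1, p.1.2) ∈ sdBoxes n lam, S ⟨(p.1.1 - 1, p.1.2), h⟩ = S p
  if (S p).val % 2 = 0 then
    (if leftSame then x k else if aboveSame then q * x k else (1 + q) * x k)
  else
    (if leftSame then (x k)⁻¹ else if aboveSame then q⁻¹ * (x k)⁻¹
     else (1 + q⁻¹) * (x k)⁻¹)

/-! ### U-turn alternating sign matrices and compass point matrices -/

/-- A `U`-turn alternating sign matrix of shape `lam` with `2n` rows
(indexed `1, 1̄, …, n, n̄` from the top) and `m` columns. -/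
def IsUASM (n m : ℕ) (lam : Fin n → ℕ) (A : Fin (2 * n) → Fin m → ℤ) : Prop :=
  (∀ i j, A i j = -1 ∨ A i j = 0 ∨ A i j = 1) ∧
  (∀ (i : Fin (2 * n)) (j₁ j₂ : Fin m), j₁ < j₂ → A i j₁ ≠ 0 → A i j₂ ≠ 0 →
      (∀ j, j₁ < j → j < j₂ → A i j = 0) → A i j₂ = -A i j₁) ∧
  (∀ (j : Fin m) (i₁ i₂ : Fin (2 * n)), i₁ < i₂ → A i₁ j ≠ 0 → A i₂ j ≠ 0 →
      (∀ i, i₁ < i → i < i₂ → A i j = 0) → A i₂ j = -A i₁ j) ∧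
  (∀ (j : Fin m) (i : Fin (2 * n)), A i j ≠ 0 → (∀ i', i' < i → A i' j = 0) → A i j = 1) ∧
  (∀ (i : Fin (2 * n)) (j : Fin m), A i j ≠ 0 → (∀ j', j < j' → A i j' = 0) → A i j = 1) ∧
  (∀ i : Fin (2 * n), (∑ j, A i j) = 0 ∨ (∑ j, A i j) = 1) ∧
  (∀ j : Fin m, (∑ i, A i j) = 0 ∨ (∑ i, A i j) = 1) ∧
  (∀ k : Fin n, (∑ j, A (rU k) j) + (∑ j, A (rB k) j) = 1) ∧
  (∀ j : Fin m, (∑ i, A i j) = if ∃ k : Fin n, lam k = j.val + 1 then 1 else 0)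

/-- Compass point directions. -/
inductive CP : Type
  | WE | NS | NE | SE | NW | SW
  deriving DecidableEq

/-- The nearest nonzero entry strictly above position `(i,j)` in its column
(deemed `-1` if there is none). -/
noncomputable def northV {n m : ℕ} (A : Fin (2 * n) → Fin m → ℤ)
    (i : Fin (2 * n)) (j : Fin m) : ℤ :=
  let s := Finset.univ.filter fun i' : Fin (2 * n) => i' < i ∧ A i' j ≠ 0
  if h : s.Nonempty then A (s.max' h) j else -1

/-- The nearest nonzero entry strictly to the right of position `(i,j)` in its row
(deemed `-1` if there is none). -/
noncomputable def eastV {n m : ℕ} (A : Fin (2 * n) → Fin m → ℤ)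
    (i : Fin (2 * n)) (j : Fin m) : ℤ :=
  let s := Finset.univ.filter fun j' : Fin m => j < j' ∧ A i j' ≠ 0
  if h : s.Nonempty then A i (s.min' h) else -1

/-- The compass point matrix `C(A)` of a UASM `A`. -/
noncomputable def cpm {n m : ℕ} (A : Fin (2 * n) → Fin m → ℤ)
    (i : Fin (2 * n)) (j : Fin m) : CP :=
  if A i j = 1 then CP.WE
  else if A i j = -1 then CP.NS
  else if northV A i j = 1 then (if eastV A i j = 1 then CP.NW else CP.NE)
  else (if eastV A i j = 1 then CP.SW else CP.SE)

/-- Compass point weights of Corollary `cor-A`. -/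
noncomputable def cpWgtXY {K : Type*} [Field K] {n : ℕ} (x y : Fin n → K)
    (i : Fin (2 * n)) (c : CP) : K :=
  if i.val % 2 = 0 then
    match c with
    | CP.WE => x (letK i) + y (letK i)
    | CP.NS => 1 | CP.NE => 1 | CP.SE => 1
    | CP.NW => y (letK i)
    | CP.SW => x (letK i)
  else
    match c with
    | CP.WE => (x (letK i))⁻¹ + (y (letK i))⁻¹
    | CP.NS => 1 | CP.NE => 1 | CP.SE => 1
    | CP.NW => (y (letK i))⁻¹
    | CP.SW => (x (letK i))⁻¹

/-- The alternative compass point weights with the binomial factors attached to `NS`. -/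
noncomputable def cpWgtXY' {K : Type*} [Field K] {n : ℕ} (x y : Fin n → K)
    (i : Fin (2 * n)) (c : CP) : K :=
  if i.val % 2 = 0 then
    match c with
    | CP.WE => 1
    | CP.NS => x (letK i) + y (letK i)
    | CP.NE => 1 | CP.SE => 1
    | CP.NW => y (letK i)
    | CP.SW => x (letK i)
  else
    match c with
    | CP.WE => 1
    | CP.NS => (x (letK i))⁻¹ + (y (letK i))⁻¹
    | CP.NE => 1 | CP.SE => 1
    | CP.NW => (y (letK i))⁻¹
    | CP.SW => (x (letK i))⁻¹

/-- Compass point weights of Corollary `cor-TokAq`, first form. -/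
noncomputable def cpWgtQa {K : Type*} [Field K] {n : ℕ} (x : Fin n → K) (q : K)
    (i : Fin (2 * n)) (c : CP) : K :=
  if i.val % 2 = 0 then
    match c with
    | CP.WE => (1 + q) * x (letK i)
    | CP.NS => 1 | CP.NE => 1 | CP.SE => 1
    | CP.NW => q * x (letK i)
    | CP.SW => x (letK i)
  else
    match c with
    | CP.WE => (1 + q⁻¹) * (x (letK i))⁻¹
    | CP.NS => 1 | CP.NE => 1 | CP.SE => 1
    | CP.NW => q⁻¹ * (x (letK i))⁻¹
    | CP.SW => (x (letK i))⁻¹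

/-- Compass point weights of Corollary `cor-TokAq`, second form. -/
noncomputable def cpWgtQb {K : Type*} [Field K] {n : ℕ} (x : Fin n → K) (q : K)
    (i : Fin (2 * n)) (c : CP) : K :=
  if i.val % 2 = 0 then
    match c with
    | CP.WE => x (letK i)
    | CP.NS => 1 + q
    | CP.NE => 1 | CP.SE => 1
    | CP.NW => q * x (letK i)
    | CP.SW => x (letK i)
  else
    match c with
    | CP.WE => (x (letK i))⁻¹
    | CP.NS => 1 + q
    | CP.NE => q
    | CP.SE => 1
    | CP.NW => (x (letK i))⁻¹
    | CP.SW => (x (letK i))⁻¹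

/-! ### Strict symplectic Gelfand–Tsetlin patterns -/

/-- Entry `m_{k,j}` (0-indexed) of a pattern `M` (row of the unbarred letter `k`). -/
def mU {n : ℕ} (M : Fin (2 * n) → ℕ → ℕ) (k : Fin n) (j : ℕ) : ℕ := M (rU k) j

/-- Entry `m_{k̄,j}` (0-indexed) of a pattern `M` (row of the barred letter `k̄`). -/
def mB {n : ℕ} (M : Fin (2 * n) → ℕ → ℕ) (k : Fin n) (j : ℕ) : ℕ := M (rB k) j

/-- Entry `m_{\overline{k-1},j}` with the convention that it is `0` when `k = 1`. -/
def mPrevB {n : ℕ} (M : Fin (2 * n) → ℕ → ℕ) (k : Fin n) (j : ℕ) : ℕ :=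
  if h : k.val = 0 then 0 else M ⟨2 * k.val - 1, by have := k.isLt; omega⟩ j

/-- A strict symplectic Gelfand–Tsetlin pattern of size `2n`, encoded as a function
`M : Fin (2n) → ℕ → ℕ` (rows indexed bottom-to-top by `1, 1̄, …, n, n̄`, vanishing
outside the triangular region: row `k` and row `k̄` have `k` entries). -/
def IsGT (n : ℕ) (M : Fin (2 * n) → ℕ → ℕ) : Prop :=
  (∀ (i : Fin (2 * n)) (j : ℕ), i.val / 2 < j → M i j = 0) ∧
  (∀ k : Fin n, ∀ j ≤ k.val, mU M k j ≤ mB M k j ∧ mB M k (j + 1) ≤ mU M k j) ∧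
  (∀ k : Fin n, ∀ h : k.val + 1 < n, ∀ j ≤ k.val,
      mB M k j ≤ mU M ⟨k.val + 1, h⟩ j ∧ mU M ⟨k.val + 1, h⟩ (j + 1) ≤ mB M k j) ∧
  (∀ k : Fin n, ∀ j : ℕ, j + 1 ≤ k.val →
      mU M k (j + 1) < mU M k j ∧ mB M k (j + 1) < mB M k j) ∧
  (∀ k : Fin n, ¬(mU M k k.val = 0 ∧ mB M k k.val = 0))

/-- A strict symplectic Gelfand–Tsetlin pattern with top row `lam`. -/
def IsGTsh (n : ℕ) (lam : Fin n → ℕ) (M : Fin (2 * n) → ℕ → ℕ) : Prop :=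
  IsGT n M ∧ ∀ j : Fin n, M ⟨2 * n - 1, by have := j.isLt; omega⟩ j.val = lam j

/-- Strict betweenness condition `B_{kj}`. -/
def Bc {n : ℕ} (M : Fin (2 * n) → ℕ → ℕ) (k : Fin n) (j : ℕ) : Prop :=
  mPrevB M k j < mU M k j ∧ (j < k.val → mU M k (j + 1) < mPrevB M k j)

/-- Left-saturation condition `L_{kj}`. -/
def Lc {n : ℕ} (M : Fin (2 * n) → ℕ → ℕ) (k : Fin n) (j : ℕ) : Prop :=
  mU M k j = mPrevB M k j

/-- Right-saturation condition `R_{kj}`. -/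
def Rc {n : ℕ} (M : Fin (2 * n) → ℕ → ℕ) (k : Fin n) (j : ℕ) : Prop :=
  j < k.val ∧ mPrevB M k j < mU M k j ∧ mPrevB M k j = mU M k (j + 1)

/-- Strict betweenness condition `B_{k̄j}`. -/
def Bb {n : ℕ} (M : Fin (2 * n) → ℕ → ℕ) (k : Fin n) (j : ℕ) : Prop :=
  mU M k j < mB M k j ∧ (j < k.val → mB M k (j + 1) < mU M k j)

/-- Left-saturation condition `L_{k̄j}`. -/
def Lb {n : ℕ} (M : Fin (2 * n) → ℕ → ℕ) (k : Fin n) (j : ℕ) : Prop :=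
  mB M k j = mU M k j

/-- Right-saturation condition `R_{k̄j}`. -/
def Rb {n : ℕ} (M : Fin (2 * n) → ℕ → ℕ) (k : Fin n) (j : ℕ) : Prop :=
  j < k.val ∧ mU M k j < mB M k j ∧ mU M k j = mB M k (j + 1)

private lemma suffix_sum {m : ℕ} (f : Fin m → ℤ)
    (hval : ∀ j, f j = -1 ∨ f j = 0 ∨ f j = 1)
    (halt : ∀ j₁ j₂ : Fin m, j₁ < j₂ → f j₁ ≠ 0 → f j₂ ≠ 0 →
      (∀ j, j₁ < j → j < j₂ → f j = 0) → f j₂ = -f j₁)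
    (hright : ∀ j : Fin m, f j ≠ 0 → (∀ j', j < j' → f j' = 0) → f j = 1) :
    ∀ d j, m ≤ j + d →
    (∑ j' ∈ Finset.univ.filter (fun j' : Fin m => j ≤ j'.val), f j') =
      if h : (Finset.univ.filter (fun j' : Fin m => j ≤ j'.val ∧ f j' ≠ 0)).Nonempty
      then (if f ((Finset.univ.filter
            (fun j' : Fin m => j ≤ j'.val ∧ f j' ≠ 0)).min' h) = 1 then 1 else 0)
      else 0 := by
  intro d
  induction d with
  | zero =>
      intro j hj
      have h1 : Finset.univ.filter (fun j' : Fin m => j ≤ j'.val) = ∅ := by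
        apply Finset.filter_false_of_mem
        intro x _
        have := x.isLt; omega
      have h2 : Finset.univ.filter (fun j' : Fin m => j ≤ j'.val ∧ f j' ≠ 0) = ∅ := by
        apply Finset.filter_false_of_mem
        intro x _
        have := x.isLt
        simp only [not_and]
        intro h; omega
      rw [h1, h2]
      simp
  | succ d ih =>
      intro j hj
      by_cases hjm : m ≤ j
      · -- same as base case
        have h1 : Finset.univ.filter (fun j' : Fin m => j ≤ j'.val) = ∅ := by
          apply Finset.filter_false_of_mem
          intro x _; have := x.isLt; omega
        have h2 : Finset.univ.filter (fun j' : Fin m => j ≤ j'.val ∧ f j' ≠ 0) = ∅ := by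
          apply Finset.filter_false_of_mem
          intro x _; have := x.isLt
          simp only [not_and]; intro h; omega
        rw [h1, h2]; simp
      · push_neg at hjm
        set jf : Fin m := ⟨j, hjm⟩ with hjf
        have hjfv : jf.val = j := rfl
        have hsplit : Finset.univ.filter (fun j' : Fin m => j ≤ j'.val)
            = insert jf (Finset.univ.filter (fun j' : Fin m => j + 1 ≤ j'.val)) := by
          ext x
          simp only [Finset.mem_filter, Finset.mem_insert, Finset.mem_univ, true_and]
          constructor
          · intro hx
            rcases Nat.eq_or_lt_of_le hx with h | h
            · left; apply Fin.ext; omega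
            · right; omega
          · rintro (rfl | hx)
            · exact le_refl j
            · omega
        have hnotmem : jf ∉ Finset.univ.filter (fun j' : Fin m => j + 1 ≤ j'.val) := by
          simp [hjf]
        have hT : (∑ j' ∈ Finset.univ.filter (fun j' : Fin m => j ≤ j'.val), f j')
            = f jf + ∑ j' ∈ Finset.univ.filter (fun j' : Fin m => j + 1 ≤ j'.val), f j' := by
          rw [hsplit, Finset.sum_insert hnotmem]
        have ihj := ih (j + 1) (by omega)
        by_cases hz : f jf = 0
        · have hFeq : Finset.univ.filter (fun j' : Fin m => j ≤ j'.val ∧ f j' ≠ 0)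
              = Finset.univ.filter (fun j' : Fin m => j + 1 ≤ j'.val ∧ f j' ≠ 0) := by
            ext x
            simp only [Finset.mem_filter, Finset.mem_univ, true_and]
            constructor
            · rintro ⟨h1, h2⟩
              refine ⟨?_, h2⟩
              rcases Nat.eq_or_lt_of_le h1 with h | h
              · exfalso; apply h2
                have : x = jf := Fin.ext (by omega)
                rw [this]; exact hz
              · omega
            · rintro ⟨h1, h2⟩; exact ⟨by omega, h2⟩
          rw [hT, hz, zero_add, ihj, hFeq]
        · -- f jf ≠ 0, min' of F j is jf
          have hmem : jf ∈ Finset.univ.filter (fun j' : Fin m => j ≤ j'.val ∧ f j' ≠ 0) := by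
            simp [hjf]; exact hz
          have hne : (Finset.univ.filter (fun j' : Fin m => j ≤ j'.val ∧ f j' ≠ 0)).Nonempty :=
            ⟨jf, hmem⟩
          have hmin : (Finset.univ.filter (fun j' : Fin m => j ≤ j'.val ∧ f j' ≠ 0)).min' hne
              = jf := by
            apply le_antisymm
            · exact Finset.min'_le _ _ hmem
            · apply Finset.le_min'
              intro y hy
              simp only [Finset.mem_filter, Finset.mem_univ, true_and] at hy
              exact hy.1
          rw [hT, ihj]
          rw [dif_pos hne, hmin]
          by_cases hne2 : (Finset.univ.filter (fun j' : Fin m => j + 1 ≤ j'.val ∧ f j' ≠ 0)).Nonempty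
          · rw [dif_pos hne2]
            set b := (Finset.univ.filter (fun j' : Fin m => j + 1 ≤ j'.val ∧ f j' ≠ 0)).min' hne2
              with hb
            have hbmem : b ∈ Finset.univ.filter (fun j' : Fin m => j + 1 ≤ j'.val ∧ f j' ≠ 0) :=
              Finset.min'_mem _ _
            simp only [Finset.mem_filter, Finset.mem_univ, true_and] at hbmem
            have hjb : jf < b := by
              have : j + 1 ≤ b.val := hbmem.1
              exact Fin.lt_def.mpr (by omega)
            have hmid : ∀ x : Fin m, jf < x → x < b → f x = 0 := by
              intro x hx1 hx2
              by_contra hfx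
              have hxm : x ∈ Finset.univ.filter (fun j' : Fin m => j + 1 ≤ j'.val ∧ f j' ≠ 0) := by
                simp only [Finset.mem_filter, Finset.mem_univ, true_and]
                exact ⟨by have := Fin.lt_def.mp hx1; omega, hfx⟩
              have := Finset.min'_le _ _ hxm
              exact absurd hx2 (not_lt.mpr this)
            have hfb : f b = -f jf := halt jf b hjb hz hbmem.2 hmid
            rcases hval jf with h1 | h1 | h1
            · rw [h1] at hfb ⊢
              rw [hfb]
              norm_num
            · exact absurd h1 hz
            · rw [h1] at hfb ⊢
              rw [hfb]
              norm_num
          · rw [dif_neg hne2]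
            have hlast : f jf = 1 := by
              apply hright jf hz
              intro j' hj'
              by_contra hfj'
              exact hne2 ⟨j', by
                simp only [Finset.mem_filter, Finset.mem_univ, true_and]
                exact ⟨by have := Fin.lt_def.mp hj'; omega, hfj'⟩⟩
            rw [hlast]
            norm_num

private lemma cp_first_iff {n m : ℕ} (hm0 : 0 < m) (A : Fin (2 * n) → Fin m → ℤ)
    (i : Fin (2 * n))
    (hval : ∀ j, A i j = -1 ∨ A i j = 0 ∨ A i j = 1)
    (halt : ∀ j₁ j₂ : Fin m, j₁ < j₂ → A i j₁ ≠ 0 → A i j₂ ≠ 0 →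
      (∀ j, j₁ < j → j < j₂ → A i j = 0) → A i j₂ = -A i j₁)
    (hright : ∀ j : Fin m, A i j ≠ 0 → (∀ j', j < j' → A i j' = 0) → A i j = 1) :
    (cpm A i ⟨0, hm0⟩ = CP.WE ∨ cpm A i ⟨0, hm0⟩ = CP.SW ∨ cpm A i ⟨0, hm0⟩ = CP.NW)
      ↔ (∑ j, A i j) = 1 := by
  have h0univ : Finset.univ.filter (fun j' : Fin m => 0 ≤ j'.val) = Finset.univ := by
    apply Finset.filter_true_of_mem; intro x _; omega
  have htot : (∑ j, A i j) =
      if h : (Finset.univ.filter (fun j' : Fin m => 0 ≤ j'.val ∧ A i j' ≠ 0)).Nonempty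
      then (if A i ((Finset.univ.filter
            (fun j' : Fin m => 0 ≤ j'.val ∧ A i j' ≠ 0)).min' h) = 1 then 1 else 0)
      else 0 := by
    rw [← suffix_sum (A i) hval halt hright m 0 (by omega), h0univ]
  set F := Finset.univ.filter (fun j' : Fin m => 0 ≤ j'.val ∧ A i j' ≠ 0) with hF
  by_cases h1 : A i ⟨0, hm0⟩ = 1
  · have hmem : (⟨0, hm0⟩ : Fin m) ∈ F := by simp [hF, h1]
    have hne : F.Nonempty := ⟨_, hmem⟩
    have hmin : F.min' hne = ⟨0, hm0⟩ :=
      le_antisymm (Finset.min'_le _ _ hmem) (by apply Finset.le_min'; intro y _; exact Fin.le_def.mpr (Nat.zero_le _))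
    rw [htot, dif_pos hne, hmin, if_pos h1]
    simp [cpm, h1]
  · by_cases h2 : A i ⟨0, hm0⟩ = -1
    · have hmem : (⟨0, hm0⟩ : Fin m) ∈ F := by simp [hF, h2]
      have hne : F.Nonempty := ⟨_, hmem⟩
      have hmin : F.min' hne = ⟨0, hm0⟩ :=
        le_antisymm (Finset.min'_le _ _ hmem) (by apply Finset.le_min'; intro y _; exact Fin.le_def.mpr (Nat.zero_le _))
      rw [htot, dif_pos hne, hmin, if_neg (by rw [h2]; norm_num)]
      have : cpm A i ⟨0, hm0⟩ = CP.NS := by simp [cpm, h2]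
      simp [this]
    · have h0 : A i ⟨0, hm0⟩ = 0 := by rcases hval ⟨0, hm0⟩ with h | h | h <;> tauto
      have hFs : F = Finset.univ.filter
          (fun j' : Fin m => (⟨0, hm0⟩ : Fin m) < j' ∧ A i j' ≠ 0) := by
        ext x
        simp only [hF, Finset.mem_filter, Finset.mem_univ, true_and]
        constructor
        · rintro ⟨-, hx⟩
          refine ⟨?_, hx⟩
          rcases Nat.eq_zero_or_pos x.val with h | h
          · exfalso; apply hx; have : x = ⟨0, hm0⟩ := Fin.ext h; rw [this]; exact h0
          · exact Fin.lt_def.mpr (by simpa using h)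
        · rintro ⟨h, hx⟩; exact ⟨Nat.zero_le _, hx⟩
      have hEdef : eastV A i ⟨0, hm0⟩ =
          if h : F.Nonempty then A i (F.min' h) else -1 := by
        rw [eastV, hFs]
      by_cases hne : F.Nonempty
      · have hE : eastV A i ⟨0, hm0⟩ = A i (F.min' hne) := by rw [hEdef, dif_pos hne]
        rw [htot, dif_pos hne]
        have hcp : cpm A i ⟨0, hm0⟩ =
            if northV A i ⟨0, hm0⟩ = 1 then (if eastV A i ⟨0, hm0⟩ = 1 then CP.NW else CP.NE)
            else (if eastV A i ⟨0, hm0⟩ = 1 then CP.SW else CP.SE) := by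
          rw [cpm, if_neg h1, if_neg h2]
        by_cases hEv : A i (F.min' hne) = 1
        · rw [if_pos hEv]
          constructor
          · intro _; rfl
          · intro _
            rw [hcp]
            have hE1 : eastV A i ⟨0, hm0⟩ = 1 := by rw [hE]; exact hEv
            by_cases hN : northV A i ⟨0, hm0⟩ = 1 <;> simp [hN, hE1]
        · rw [if_neg hEv]
          constructor
          · intro hP
            exfalso
            have hE1 : eastV A i ⟨0, hm0⟩ ≠ 1 := by rw [hE]; exact hEv
            rw [hcp] at hP
            by_cases hN : northV A i ⟨0, hm0⟩ = 1 <;> simp [hN, hE1] at hP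
          · intro h; norm_num at h
      · rw [htot, dif_neg hne]
        have hE : eastV A i ⟨0, hm0⟩ = -1 := by rw [hEdef, dif_neg hne]
        have hcp : cpm A i ⟨0, hm0⟩ =
            if northV A i ⟨0, hm0⟩ = 1 then CP.NE else CP.SE := by
          rw [cpm, if_neg h1, if_neg h2, hE]
          norm_num
        constructor
        · intro hP
          rw [hcp] at hP
          by_cases hN : northV A i ⟨0, hm0⟩ = 1 <;> simp [hN] at hP
        · intro h; norm_num at h

/-- The U-turn property on the level of compass point matrices:
`χ(P_k) + χ(P_k̄) = 1`, i.e. exactly one of the first entries of rows `k`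
and `k̄` of `C(A)` lies in `{WE, SW, NW}`. -/
theorem chi_P_add_chi_Pbar (n : ℕ) (hn : 0 < n)
    (lam : Fin n → ℕ) (hlam : StrictAnti lam) (hlpos : ∀ i, 0 < lam i)
    (m : ℕ) (hm : m = lam ⟨0, hn⟩) (hm0 : 0 < m)
    (A : Fin (2 * n) → Fin m → ℤ) (hA : IsUASM n m lam A) (k : Fin n) :
    (if cpm A (rU k) ⟨0, hm0⟩ = CP.WE ∨ cpm A (rU k) ⟨0, hm0⟩ = CP.SW ∨
        cpm A (rU k) ⟨0, hm0⟩ = CP.NW then 1 else 0)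
      + (if cpm A (rB k) ⟨0, hm0⟩ = CP.WE ∨ cpm A (rB k) ⟨0, hm0⟩ = CP.SW ∨
        cpm A (rB k) ⟨0, hm0⟩ = CP.NW then 1 else 0) = 1 := by
  obtain ⟨hval, hrowalt, hcolalt, htop, hright, hrowsum, hcolsum, huturn, hshape⟩ := hA
  have h1 := cp_first_iff hm0 A (rU k) (hval (rU k)) (hrowalt (rU k)) (hright (rU k))
  have h2 := cp_first_iff hm0 A (rB k) (hval (rB k)) (hrowalt (rB k)) (hright (rB k))
  have hut := huturn k
  rcases hrowsum (rU k) with hu | hu <;> rcases hrowsum (rB k) with hb | hb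
  · rw [hu, hb] at hut; norm_num at hut
  · have hnP1 : ¬(cpm A (rU k) ⟨0, hm0⟩ = CP.WE ∨ cpm A (rU k) ⟨0, hm0⟩ = CP.SW ∨
        cpm A (rU k) ⟨0, hm0⟩ = CP.NW) := fun h => by have := h1.mp h; omega
    rw [if_neg hnP1, if_pos (h2.mpr hb)]
  · have hnP2 : ¬(cpm A (rB k) ⟨0, hm0⟩ = CP.WE ∨ cpm A (rB k) ⟨0, hm0⟩ = CP.SW ∨
        cpm A (rB k) ⟨0, hm0⟩ = CP.NW) := fun h => by have := h2.mp h; omega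
    rw [if_pos (h1.mpr hu), if_neg hnP2]
  · rw [hu, hb] at hut; norm_num at hut

end TokC
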